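/- Let (d_ν)_{ν≥0} be nonnegative integers, only finitely many nonzero, satisfying d_0 < a_1, d_ν ≤ a_{ν+1} for all ν, and d_{ν−1} = 0 whenever d_ν = a_{ν+1} (for ν ≥ 1). Set n = Σ_{ν≥0} d_ν q_ν and assume n ≥ 1; let k be the smallest index with d_k ≠ 0, and put m = Σ_{ν≥k} d_ν p_ν. Then nα − m lies strictly between (−1)^k/q'_{k+2} and (−1)^k/q'_k: if k is even then 1/q'_{k+2} < nα − m < 1/q'_k, and if k is odd then −1/q'_k < nα − m < −1/q'_{k+2}. -/

import Mathlib

namespace CFApprox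

/-- The sequence `α_n` of complete quotients of `α`: `α_0 = α`,
`α_{n+1} = 1/(α_n - ⌊α_n⌋)`. -/
noncomputable def cfAlpha (α : ℝ) : ℕ → ℝ
  | 0 => α
  | n + 1 => 1 / (cfAlpha α n - ⌊cfAlpha α n⌋)

/-- The partial quotients `a_n = ⌊α_n⌋` of the continued fraction of `α`. -/
noncomputable def cfA (α : ℝ) (n : ℕ) : ℤ := ⌊cfAlpha α n⌋

/-- The numerators `p_n` of the convergents of `α`:
`p_0 = a_0`, `p_1 = a_1 a_0 + 1`, `p_{n+2} = a_{n+2} p_{n+1} + p_n`. -/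
noncomputable def cfP (α : ℝ) : ℕ → ℤ
  | 0 => cfA α 0
  | 1 => cfA α 1 * cfA α 0 + 1
  | n + 2 => cfA α (n + 2) * cfP α (n + 1) + cfP α n

/-- The denominators `q_n` of the convergents of `α`:
`q_0 = 1`, `q_1 = a_1`, `q_{n+2} = a_{n+2} q_{n+1} + q_n`. -/
noncomputable def cfQ (α : ℝ) : ℕ → ℤ
  | 0 => 1
  | 1 => cfA α 1
  | n + 2 => cfA α (n + 2) * cfQ α (n + 1) + cfQ α n

/-- `q'_n = α_1 α_2 ⋯ α_n`. -/
noncomputable def cfQ' (α : ℝ) (n : ℕ) : ℝ := ∏ i ∈ Finset.Icc 1 n, cfAlpha α i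

variable {α : ℝ}

/-- All complete quotients of an irrational `α > 1` are irrational and `> 1`. -/
lemma cf_basic (hα : 1 < α) (hirr : Irrational α) :
    ∀ n, Irrational (cfAlpha α n) ∧ 1 < cfAlpha α n := by
  intro n
  induction n with
  | zero => exact ⟨hirr, hα⟩
  | succ n ih =>
    obtain ⟨h1, h2⟩ := ih
    have hfr : Irrational (cfAlpha α n - ⌊cfAlpha α n⌋) := h1.sub_intCast _
    have hfr0 : 0 < cfAlpha α n - ⌊cfAlpha α n⌋ := by
      have := Int.fract_nonneg (cfAlpha α n)
      rw [Int.fract] at this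
      rcases this.lt_or_eq with h | h
      · exact h
      · exact absurd h.symm (sub_ne_zero.mpr (h1.ne_int _))
    have hfr1 : cfAlpha α n - ⌊cfAlpha α n⌋ < 1 := by
      have := Int.fract_lt_one (cfAlpha α n)
      rwa [Int.fract] at this
    constructor
    · show Irrational (1 / _)
      rw [one_div]
      exact hfr.inv
    · show 1 < 1 / _
      exact one_lt_one_div hfr0 hfr1

lemma alpha_pos (hα : 1 < α) (hirr : Irrational α) (n : ℕ) : 0 < cfAlpha α n :=
  lt_trans one_pos (cf_basic hα hirr n).2

/-- `α_n - a_n = 1/α_{n+1}` -/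
lemma fract_eq (hα : 1 < α) (hirr : Irrational α) (n : ℕ) :
    cfAlpha α n - (cfA α n : ℝ) = 1 / cfAlpha α (n + 1) := by
  have h1 : Irrational (cfAlpha α n) := (cf_basic hα hirr n).1
  have hne : cfAlpha α n - (⌊cfAlpha α n⌋ : ℝ) ≠ 0 :=
    sub_ne_zero.mpr (h1.ne_int _)
  show _ = 1 / (1 / (cfAlpha α n - ⌊cfAlpha α n⌋))
  rw [one_div_one_div]
  rfl

lemma q'_succ (n : ℕ) : cfQ' α (n + 1) = cfQ' α n * cfAlpha α (n + 1) :=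
  Finset.prod_Icc_succ_top (Nat.le_add_left 1 n) _

lemma q'_pos (hα : 1 < α) (hirr : Irrational α) (n : ℕ) : 0 < cfQ' α n :=
  Finset.prod_pos fun i _ => alpha_pos hα hirr i

/-- `q_n α - p_n = (-1)^n / q'_{n+1}` -/
lemma beta_eq (hα : 1 < α) (hirr : Irrational α) (n : ℕ) :
    (cfQ α n : ℝ) * α - (cfP α n : ℝ) = (-1) ^ n / cfQ' α (n + 1) := by
  have hapos : ∀ j, 0 < cfAlpha α j := alpha_pos hα hirr
  have hfr := fract_eq hα hirr
  have hq'pos := q'_pos hα hirr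
  induction n using Nat.twoStepInduction with
  | zero =>
    simp only [cfQ, cfP, cfQ', pow_zero, Int.cast_one, one_mul]
    rw [show Finset.Icc 1 1 = {1} from rfl, Finset.prod_singleton]
    have := hfr 0
    simpa [cfAlpha, cfA] using this
  | one =>
    have h0 : α - (cfA α 0 : ℝ) = 1 / cfAlpha α 1 := hfr 0
    have h1 : cfAlpha α 1 - (cfA α 1 : ℝ) = 1 / cfAlpha α 2 := hfr 1
    have hq'2 : cfQ' α 2 = cfAlpha α 1 * cfAlpha α 2 := by
      rw [show (2:ℕ) = 1 + 1 from rfl, q'_succ]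
      rw [show cfQ' α 1 = cfAlpha α 1 by
        rw [show (1:ℕ) = 0 + 1 from rfl, q'_succ, cfQ']; simp]
    simp only [cfQ, cfP, pow_one, Int.cast_add, Int.cast_mul, Int.cast_one]
    rw [hq'2]
    have ha1 : cfAlpha α 1 ≠ 0 := (hapos 1).ne'
    have ha2 : cfAlpha α 2 ≠ 0 := (hapos 2).ne'
    field_simp at h0 h1 ⊢
    linear_combination ((cfA α 1 : ℝ) * cfAlpha α 2) * h0 - h1
  | more n ih2 ih1 =>
    have hq : (cfQ α (n+2) : ℝ) = (cfA α (n+2) : ℝ) * (cfQ α (n+1) : ℝ) + (cfQ α n : ℝ) := by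
      rw [cfQ]; push_cast; ring
    have hp : (cfP α (n+2) : ℝ) = (cfA α (n+2) : ℝ) * (cfP α (n+1) : ℝ) + (cfP α n : ℝ) := by
      rw [cfP]; push_cast; ring
    have key : (cfQ α (n+2) : ℝ) * α - cfP α (n+2)
        = (cfA α (n+2) : ℝ) * ((cfQ α (n+1) : ℝ) * α - cfP α (n+1))
          + ((cfQ α n : ℝ) * α - cfP α n) := by
      rw [hq, hp]; ring
    rw [key, ih2, ih1]
    have e1 : cfQ' α (n+2) = cfQ' α (n+1) * cfAlpha α (n+2) := q'_succ (n+1)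
    have e2 : cfQ' α (n+3) = cfQ' α (n+2) * cfAlpha α (n+3) := q'_succ (n+2)
    have h2 : cfAlpha α (n+2) - (cfA α (n+2) : ℝ) = 1 / cfAlpha α (n+3) := hfr (n+2)
    have h1' : 0 < cfQ' α (n+1) := hq'pos (n+1)
    have h2' : 0 < cfQ' α (n+2) := hq'pos (n+2)
    have ha2 : (0:ℝ) < cfAlpha α (n+2) := hapos (n+2)
    have ha3 : (0:ℝ) < cfAlpha α (n+3) := hapos (n+3)
    rw [show n + 1 + 1 = n + 2 from rfl, show n + 2 + 1 = n + 3 from rfl]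
    rw [e2, e1]
    field_simp at h2 ⊢
    linear_combination ((-1:ℝ)^n) * h2

lemma a_ge_one (hα : 1 < α) (hirr : Irrational α) (n : ℕ) : 1 ≤ cfA α (n + 1) := by
  have := (cf_basic hα hirr (n + 1)).2
  exact Int.le_floor.mpr (by exact_mod_cast this.le)

/-- `a_{t+1} / q'_{t+1} = 1/q'_t - 1/q'_{t+2}` -/
lemma key_id (hα : 1 < α) (hirr : Irrational α) (t : ℕ) :
    (cfA α (t + 1) : ℝ) * (1 / cfQ' α (t + 1)) = 1 / cfQ' α t - 1 / cfQ' α (t + 2) := by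
  have e1 : cfQ' α (t + 1) = cfQ' α t * cfAlpha α (t + 1) := q'_succ t
  have e2 : cfQ' α (t + 2) = cfQ' α (t + 1) * cfAlpha α (t + 2) := q'_succ (t + 1)
  have h : cfAlpha α (t + 1) - (cfA α (t + 1) : ℝ) = 1 / cfAlpha α (t + 2) :=
    fract_eq hα hirr (t + 1)
  have h0 : 0 < cfQ' α t := q'_pos hα hirr t
  have h1 : (0:ℝ) < cfAlpha α (t + 1) := lt_trans one_pos (cf_basic hα hirr (t+1)).2
  have h2 : (0:ℝ) < cfAlpha α (t + 2) := lt_trans one_pos (cf_basic hα hirr (t+2)).2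
  rw [e2, e1]
  field_simp at h ⊢
  linear_combination (-1:ℝ) * h

/-- The main backwards-induction invariant. -/
lemma core (hα : 1 < α) (hirr : Irrational α) (d : ℕ → ℕ)
    (hle : ∀ ν : ℕ, (d ν : ℤ) ≤ cfA α (ν + 1)) :
    ∀ M t : ℕ,
      -(1 / cfQ' α (t + 1)) <
        (-1:ℝ) ^ t * ∑ j ∈ Finset.Ico t (t + M), (-1:ℝ) ^ j * d j * (1 / cfQ' α (j + 1)) ∧
      (-1:ℝ) ^ t * ∑ j ∈ Finset.Ico t (t + M), (-1:ℝ) ^ j * d j * (1 / cfQ' α (j + 1)) <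
        1 / cfQ' α t := by
  have hc : ∀ u : ℕ, 0 < 1 / cfQ' α u := fun u => one_div_pos.mpr (q'_pos hα hirr u)
  intro M
  induction M with
  | zero =>
    intro t
    simp only [Nat.add_zero, Finset.Ico_self, Finset.sum_empty, mul_zero]
    exact ⟨neg_neg_of_pos (hc (t+1)), hc t⟩
  | succ M ih =>
    intro t
    obtain ⟨ihl, ihu⟩ := ih (t + 1)
    have hsplit : ∑ j ∈ Finset.Ico t (t + (M + 1)), (-1:ℝ) ^ j * d j * (1 / cfQ' α (j + 1))
        = (-1:ℝ) ^ t * d t * (1 / cfQ' α (t + 1))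
          + ∑ j ∈ Finset.Ico (t + 1) (t + 1 + M), (-1:ℝ) ^ j * d j * (1 / cfQ' α (j + 1)) := by
      rw [show t + (M + 1) = t + 1 + M by omega]
      exact Finset.sum_eq_sum_Ico_succ_bot (by omega) _
    set Ssum := ∑ j ∈ Finset.Ico (t + 1) (t + 1 + M), (-1:ℝ) ^ j * d j * (1 / cfQ' α (j + 1))
      with hSsum
    have hsq : (-1:ℝ) ^ t * (-1:ℝ) ^ t = 1 := by
      rw [← pow_add]; exact Even.neg_one_pow ⟨t, rfl⟩
    have hT : (-1:ℝ) ^ t * ∑ j ∈ Finset.Ico t (t + (M + 1)),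
          (-1:ℝ) ^ j * d j * (1 / cfQ' α (j + 1))
        = (d t : ℝ) * (1 / cfQ' α (t + 1)) - (-1:ℝ) ^ (t + 1) * Ssum := by
      rw [hsplit]
      linear_combination ((d t : ℝ) * (1 / cfQ' α (t + 1))) * hsq
    have hA : (d t : ℝ) ≤ (cfA α (t + 1) : ℝ) := by exact_mod_cast hle t
    have hkey := key_id hα hirr t
    have hdn : (0:ℝ) ≤ (d t : ℝ) := Nat.cast_nonneg _
    have hmul : (d t : ℝ) * (1 / cfQ' α (t + 1)) ≤ (cfA α (t + 1) : ℝ) * (1 / cfQ' α (t + 1)) :=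
      mul_le_mul_of_nonneg_right hA (hc (t + 1)).le
    rw [hT]
    constructor
    · have := mul_nonneg hdn (hc (t + 1)).le
      linarith [ihu]
    · linarith [ihl, hc (t + 2)]

/-- If `n = ∑_ν d_ν q_ν` is the `α`-adic expansion of `n ≥ 1` and `k` is the smallest
index with `d_k ≠ 0`, then with `m = ∑_{ν ≥ k} d_ν p_ν`, the number `nα - m` lies
strictly between `(-1)^k/q'_{k+2}` and `(-1)^k/q'_k`. -/
theorem alpha_adic_approximation (α : ℝ) (hα : 1 < α) (hirr : Irrational α)
    (d : ℕ → ℕ) (hfin : (Function.support d).Finite)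
    (h0 : (d 0 : ℤ) < cfA α 1)
    (hle : ∀ ν : ℕ, (d ν : ℤ) ≤ cfA α (ν + 1))
    (hconsec : ∀ ν : ℕ, 1 ≤ ν → (d ν : ℤ) = cfA α (ν + 1) → d (ν - 1) = 0)
    (n : ℕ) (hn1 : 1 ≤ n) (hn : (n : ℤ) = ∑ᶠ ν : ℕ, (d ν : ℤ) * cfQ α ν)
    (k : ℕ) (hk : d k ≠ 0) (hkmin : ∀ ν, ν < k → d ν = 0)
    (m : ℤ) (hm : m = ∑ᶠ ν : ℕ, (d ν : ℤ) * cfP α ν) :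
    (Even k →
      1 / cfQ' α (k + 2) < (n : ℝ) * α - (m : ℝ) ∧ (n : ℝ) * α - (m : ℝ) < 1 / cfQ' α k) ∧
    (Odd k →
      -(1 / cfQ' α k) < (n : ℝ) * α - (m : ℝ) ∧
        (n : ℝ) * α - (m : ℝ) < -(1 / cfQ' α (k + 2))) := by
  have hc : ∀ u : ℕ, 0 < 1 / cfQ' α u := fun u => one_div_pos.mpr (q'_pos hα hirr u)
  obtain ⟨N, hN⟩ : ∃ N, ∀ x ∈ Function.support d, x ≤ N := by
    obtain ⟨N, hN⟩ := hfin.bddAbove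
    exact ⟨N, fun x hx => hN hx⟩
  set R := N + k + 3 with hR
  have hdz : ∀ ν, d ν ≠ 0 → ν < R := fun ν h =>
    lt_of_le_of_lt (hN ν h) (by omega)
  have hsubQ : Function.support (fun ν => (d ν : ℤ) * cfQ α ν) ⊆ ↑(Finset.range R) := by
    intro ν hν
    simp only [Finset.coe_range, Set.mem_Iio]
    refine hdz ν fun hd0 => ?_
    simp [Function.mem_support, hd0] at hν
  have hsubP : Function.support (fun ν => (d ν : ℤ) * cfP α ν) ⊆ ↑(Finset.range R) := by
    intro ν hν
    simp only [Finset.coe_range, Set.mem_Iio]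
    refine hdz ν fun hd0 => ?_
    simp [Function.mem_support, hd0] at hν
  have hnR : (n : ℤ) = ∑ ν ∈ Finset.range R, (d ν : ℤ) * cfQ α ν := by
    rw [hn]; exact finsum_eq_sum_of_support_subset _ hsubQ
  have hmR : m = ∑ ν ∈ Finset.range R, (d ν : ℤ) * cfP α ν := by
    rw [hm]; exact finsum_eq_sum_of_support_subset _ hsubP
  have hnr : (n : ℝ) = ∑ ν ∈ Finset.range R, (d ν : ℝ) * (cfQ α ν : ℝ) := by
    exact_mod_cast congrArg (fun z : ℤ => (z : ℝ)) hnR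
  have hmr : (m : ℝ) = ∑ ν ∈ Finset.range R, (d ν : ℝ) * (cfP α ν : ℝ) := by
    exact_mod_cast congrArg (fun z : ℤ => (z : ℝ)) hmR
  have hS : (n : ℝ) * α - (m : ℝ)
      = ∑ ν ∈ Finset.Ico k R, (-1:ℝ) ^ ν * d ν * (1 / cfQ' α (ν + 1)) := by
    rw [hnr, hmr, Finset.sum_mul, ← Finset.sum_sub_distrib]
    have e1 : ∀ ν ∈ Finset.range R, (d ν : ℝ) * (cfQ α ν : ℝ) * α - (d ν : ℝ) * (cfP α ν : ℝ)
        = (-1:ℝ) ^ ν * d ν * (1 / cfQ' α (ν + 1)) := by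
      intro ν _
      have hb := beta_eq hα hirr ν
      calc (d ν : ℝ) * (cfQ α ν : ℝ) * α - (d ν : ℝ) * (cfP α ν : ℝ)
          = (d ν : ℝ) * ((cfQ α ν : ℝ) * α - (cfP α ν : ℝ)) := by ring
        _ = (d ν : ℝ) * ((-1) ^ ν / cfQ' α (ν + 1)) := by rw [hb]
        _ = (-1:ℝ) ^ ν * d ν * (1 / cfQ' α (ν + 1)) := by ring
    rw [Finset.sum_congr rfl e1]
    rw [Finset.range_eq_Ico, ← Finset.sum_Ico_consecutive _ (Nat.zero_le k) (show k ≤ R by omega)]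
    have : ∑ ν ∈ Finset.Ico 0 k, (-1:ℝ) ^ ν * d ν * (1 / cfQ' α (ν + 1)) = 0 :=
      Finset.sum_eq_zero fun ν hν => by
        rw [hkmin ν (Finset.mem_Ico.mp hν).2]; simp
    rw [this, zero_add]
  set S := ∑ ν ∈ Finset.Ico k R, (-1:ℝ) ^ ν * d ν * (1 / cfQ' α (ν + 1)) with hSdef
  -- upper bound on T = (-1)^k S
  have hcore_k := core hα hirr d hle (R - k) k
  rw [show k + (R - k) = R by omega] at hcore_k
  have hTu : (-1:ℝ) ^ k * S < 1 / cfQ' α k := hcore_k.2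
  -- two-step unfolding for the lower bound
  have hsplit : S = (-1:ℝ) ^ k * d k * (1 / cfQ' α (k + 1))
      + (-1:ℝ) ^ (k + 1) * d (k + 1) * (1 / cfQ' α (k + 2))
      + ∑ ν ∈ Finset.Ico (k + 2) R, (-1:ℝ) ^ ν * d ν * (1 / cfQ' α (ν + 1)) := by
    rw [hSdef, Finset.sum_eq_sum_Ico_succ_bot (show k < R by omega),
      Finset.sum_eq_sum_Ico_succ_bot (show k + 1 < R by omega)]
    ring
  have hcore_k2 := core hα hirr d hle (R - (k + 2)) (k + 2)
  rw [show k + 2 + (R - (k + 2)) = R by omega] at hcore_k2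
  have hVlow : -(1 / cfQ' α (k + 3)) <
      (-1:ℝ) ^ (k + 2) * ∑ ν ∈ Finset.Ico (k + 2) R, (-1:ℝ) ^ ν * d ν * (1 / cfQ' α (ν + 1)) := by
    have := hcore_k2.1
    rwa [show k + 2 + 1 = k + 3 from rfl] at this
  have hd0 : (1:ℝ) ≤ (d k : ℝ) := by exact_mod_cast Nat.one_le_iff_ne_zero.mpr hk
  have hd1 : (d (k + 1) : ℝ) ≤ (cfA α (k + 2) : ℝ) - 1 := by
    have hlt : (d (k + 1) : ℤ) < cfA α (k + 2) := by
      refine lt_of_le_of_ne (hle (k + 1)) fun h => ?_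
      exact hk (by simpa using hconsec (k + 1) (by omega) h)
    have : (d (k + 1) : ℤ) ≤ cfA α (k + 2) - 1 := by omega
    exact_mod_cast this
  have hkey2 := key_id hα hirr (k + 1)
  rw [show k + 1 + 1 = k + 2 from rfl, show k + 1 + 2 = k + 3 from rfl] at hkey2
  have hsq : (-1:ℝ) ^ k * (-1:ℝ) ^ k = 1 := by
    rw [← pow_add]; exact Even.neg_one_pow ⟨k, rfl⟩
  have hexp : (-1:ℝ) ^ k * S = (d k : ℝ) * (1 / cfQ' α (k + 1))
      - (d (k + 1) : ℝ) * (1 / cfQ' α (k + 2))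
      + (-1:ℝ) ^ (k + 2) * ∑ ν ∈ Finset.Ico (k + 2) R, (-1:ℝ) ^ ν * d ν * (1 / cfQ' α (ν + 1)) := by
    rw [hsplit]
    linear_combination ((d k : ℝ) * (1 / cfQ' α (k + 1))
      - (d (k + 1) : ℝ) * (1 / cfQ' α (k + 2))) * hsq
  have hTl : 1 / cfQ' α (k + 2) < (-1:ℝ) ^ k * S := by
    rw [hexp]
    have h1 : (d (k + 1) : ℝ) * (1 / cfQ' α (k + 2))
        ≤ ((cfA α (k + 2) : ℝ) - 1) * (1 / cfQ' α (k + 2)) :=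
      mul_le_mul_of_nonneg_right hd1 (hc (k + 2)).le
    have h2 : 1 * (1 / cfQ' α (k + 1)) ≤ (d k : ℝ) * (1 / cfQ' α (k + 1)) :=
      mul_le_mul_of_nonneg_right hd0 (hc (k + 1)).le
    nlinarith [hVlow, hkey2, hc (k + 1), hc (k + 2), hc (k + 3)]
  rw [hS]
  constructor
  · intro hpar
    have hpow : (-1:ℝ) ^ k = 1 := hpar.neg_one_pow
    rw [hpow, one_mul] at hTl hTu
    exact ⟨hTl, hTu⟩
  · intro hpar
    have hpow : (-1:ℝ) ^ k = -1 := hpar.neg_one_pow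
    rw [hpow] at hTl hTu
    constructor <;> linarith

end CFApprox
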